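/- Let P₁, P₂ ∈ ℝ^{S×S} be row-stochastic matrices such that for every x the support of the row P₁(x,·) is contained in the support of P₂(x,·), and let γ ∈ [0,1). Then I − γP₂ is invertible and for every v ∈ ℝ^S, ‖(I − γP₂)⁻¹(γP₁ − γP₂)v‖∞ ≤ (γ√2/(1−γ)) · (max_{x∈S} √(KL(P₁(x,·)‖P₂(x,·)))) · ‖v‖∞. -/

import Mathlib

open Finset Matrix

/-- Supremum norm of a vector indexed by a finite type. -/
noncomputable def supNorm {S : Type*} [Fintype S] (v : S → ℝ) : ℝ := ⨆ x, |v x|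

/-- KL divergence of finitely supported probability vectors,
with the convention `0 * log 0 = 0` (automatic since `Real.log 0 = 0`). -/
noncomputable def KLfin {S : Type*} [Fintype S] (p q : S → ℝ) : ℝ :=
  ∑ y, p y * Real.log (p y / q y)

lemma abs_le_supNorm {S : Type*} [Fintype S] (v : S → ℝ) (x : S) : |v x| ≤ supNorm v := by
  unfold supNorm
  exact le_ciSup (Set.Finite.bddAbove (Set.finite_range fun x => |v x|)) x

lemma supNorm_nonneg {S : Type*} [Fintype S] [Nonempty S] (v : S → ℝ) : 0 ≤ supNorm v :=
  (abs_nonneg _).trans (abs_le_supNorm v (Classical.arbitrary S))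

lemma supNorm_le {S : Type*} [Fintype S] [Nonempty S] {v : S → ℝ} {c : ℝ}
    (h : ∀ x, |v x| ≤ c) : supNorm v ≤ c :=
  ciSup_le h

/-- The auxiliary function `φ(t) = (t+1) log t - 2(t-1)`. -/
noncomputable def phiAux (t : ℝ) : ℝ := (t + 1) * Real.log t - 2 * (t - 1)

lemma hasDerivAt_phiAux {t : ℝ} (ht : 0 < t) :
    HasDerivAt phiAux (Real.log t + t⁻¹ - 1) t := by
  have hlog := Real.hasDerivAt_log ht.ne'
  have h1 : HasDerivAt (fun s : ℝ => (s + 1) * Real.log s)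
      (1 * Real.log t + (t + 1) * t⁻¹) t := ((hasDerivAt_id t).add_const 1).mul hlog
  have h2 : HasDerivAt (fun s : ℝ => 2 * (s - 1)) 2 t := by
    simpa using ((hasDerivAt_id t).sub_const 1).const_mul 2
  have := h1.sub h2
  refine this.congr_deriv ?_
  field_simp
  ring

lemma phiAux_monotone : MonotoneOn phiAux (Set.Ioi 0) := by
  apply monotoneOn_of_deriv_nonneg (convex_Ioi 0)
  · apply ContinuousOn.sub
    · exact (continuousOn_id.add continuousOn_const).mul
        (Real.continuousOn_log.mono (fun x hx => ne_of_gt hx))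
    · exact Continuous.continuousOn (by continuity)
  · intro x hx
    rw [interior_Ioi] at hx
    exact (hasDerivAt_phiAux hx).differentiableAt.differentiableWithinAt
  · intro x hx
    rw [interior_Ioi] at hx
    rw [(hasDerivAt_phiAux hx).deriv]
    have := Real.one_sub_inv_le_log_of_pos hx
    linarith

lemma phiAux_one : phiAux 1 = 0 := by simp [phiAux]

/-- The auxiliary function `g(t) = (2t+4)(t log t - t + 1) - 3(t-1)^2`. -/
noncomputable def gAux (t : ℝ) : ℝ :=
  (2 * t + 4) * (t * Real.log t - t + 1) - 3 * (t - 1) ^ 2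

lemma hasDerivAt_gAux {t : ℝ} (ht : 0 < t) : HasDerivAt gAux (4 * phiAux t) t := by
  have hlog := Real.hasDerivAt_log ht.ne'
  have h1 : HasDerivAt (fun s : ℝ => s * Real.log s) (Real.log t + 1) t := by
    have := (hasDerivAt_id t).mul hlog
    refine this.congr_deriv ?_
    field_simp
    simp only [id]; ring
  have h2 : HasDerivAt (fun s : ℝ => s * Real.log s - s + 1) (Real.log t) t := by
    have := (h1.sub (hasDerivAt_id t)).add_const 1
    refine this.congr_deriv ?_; ring
  have h3 : HasDerivAt (fun s : ℝ => 2 * s + 4) 2 t := by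
    simpa using ((hasDerivAt_id t).const_mul 2).add_const 4
  have h4 := h3.mul h2
  have h5 : HasDerivAt (fun s : ℝ => 3 * (s - 1) ^ 2) (3 * (2 * (t - 1) ^ 1 * 1)) t :=
    (((hasDerivAt_id t).sub_const 1).pow 2).const_mul 3
  have := h4.sub h5
  refine this.congr_deriv ?_
  simp [phiAux]
  ring

lemma gAux_continuousOn : ContinuousOn gAux (Set.Ioi 0) := by
  have hlog : ContinuousOn Real.log (Set.Ioi 0) :=
    Real.continuousOn_log.mono (fun x hx => ne_of_gt hx)
  apply ContinuousOn.sub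
  · exact (Continuous.continuousOn (f := fun t : ℝ => 2 * t + 4) (by continuity)).mul
      (((continuousOn_id.mul hlog).sub continuousOn_id).add continuousOn_const)
  · exact Continuous.continuousOn (by continuity)

lemma gAux_one : gAux 1 = 0 := by simp [gAux]

lemma gAux_nonneg {t : ℝ} (ht : 0 < t) : 0 ≤ gAux t := by
  rcases le_total 1 t with h | h
  · have hmono : MonotoneOn gAux (Set.Ici 1) := by
      apply monotoneOn_of_deriv_nonneg (convex_Ici 1)
      · exact gAux_continuousOn.mono (fun x hx => Set.mem_Ioi.mpr (lt_of_lt_of_le one_pos hx))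
      · intro x hx
        rw [interior_Ici] at hx
        exact (hasDerivAt_gAux (lt_trans one_pos hx)).differentiableAt.differentiableWithinAt
      · intro x hx
        rw [interior_Ici] at hx
        rw [(hasDerivAt_gAux (lt_trans one_pos hx)).deriv]
        have hphi : phiAux 1 ≤ phiAux x :=
          phiAux_monotone (Set.mem_Ioi.mpr one_pos) (Set.mem_Ioi.mpr (lt_trans one_pos hx)) hx.le
        rw [phiAux_one] at hphi
        linarith
    have := hmono (Set.mem_Ici.mpr le_rfl) (Set.mem_Ici.mpr h) h
    rwa [gAux_one] at this
  · have hanti : AntitoneOn gAux (Set.Ioc 0 1) := by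
      apply antitoneOn_of_deriv_nonpos (convex_Ioc 0 1)
      · exact gAux_continuousOn.mono (fun x hx => hx.1)
      · intro x hx
        rw [interior_Ioc] at hx
        exact (hasDerivAt_gAux hx.1).differentiableAt.differentiableWithinAt
      · intro x hx
        rw [interior_Ioc] at hx
        rw [(hasDerivAt_gAux hx.1).deriv]
        have hphi : phiAux x ≤ phiAux 1 :=
          phiAux_monotone (Set.mem_Ioi.mpr hx.1) (Set.mem_Ioi.mpr one_pos) hx.2.le
        rw [phiAux_one] at hphi
        linarith
    have := hanti (Set.mem_Ioc.mpr ⟨ht, h⟩) (Set.mem_Ioc.mpr ⟨one_pos, le_rfl⟩) h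
    rwa [gAux_one] at this

/-- Pointwise inequality `3(t-1)² ≤ (2t+4)(t log t - t + 1)` for `t ≥ 0`. -/
lemma ptC {t : ℝ} (ht : 0 ≤ t) :
    3 * (t - 1) ^ 2 ≤ (2 * t + 4) * (t * Real.log t - t + 1) := by
  rcases ht.eq_or_lt with h | h
  · simp [← h]
    norm_num
  · have := gAux_nonneg h
    unfold gAux at this
    linarith

/-- Scaled pointwise inequality. -/
lemma ptD {p q : ℝ} (hp : 0 ≤ p) (hq : 0 ≤ q) (hs : q = 0 → p = 0) :
    3 * (p - q) ^ 2 ≤ (2 * p + 4 * q) * (p * Real.log (p / q) - p + q) := by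
  rcases hq.eq_or_lt with h | h
  · rw [← h, hs h.symm]; norm_num
  · have ht : (0 : ℝ) ≤ p / q := div_nonneg hp h.le
    have hC := ptC ht
    have hpq : q * (p / q) = p := by field_simp
    set t := p / q with htdef
    have e1 : 3 * (p - q) ^ 2 = q ^ 2 * (3 * (t - 1) ^ 2) := by
      rw [← hpq]; ring
    have e2 : (2 * p + 4 * q) * (p * Real.log t - p + q) =
        q ^ 2 * ((2 * t + 4) * (t * Real.log t - t + 1)) := by
      rw [← hpq]; ring
    rw [e1, e2]
    exact mul_le_mul_of_nonneg_left hC (sq_nonneg q)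

/-- Pointwise nonnegativity of the KL integrand corrected term. -/
lemma ptE {p q : ℝ} (hp : 0 ≤ p) (hq : 0 ≤ q) (hs : q = 0 → p = 0) :
    0 ≤ p * Real.log (p / q) - p + q := by
  rcases hq.eq_or_lt with h | h
  · rw [← h, hs h.symm]; simp
  · rcases hp.eq_or_lt with h2 | h2
    · rw [← h2]; simpa using h.le
    · have hlog : 1 - (p / q)⁻¹ ≤ Real.log (p / q) :=
        Real.one_sub_inv_le_log_of_pos (div_pos h2 h)
      have hinv : (p / q)⁻¹ = q / p := by
        rw [inv_div]
      rw [hinv] at hlog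
      have : p * (1 - q / p) ≤ p * Real.log (p / q) :=
        mul_le_mul_of_nonneg_left hlog hp
      have hpq : p * (1 - q / p) = p - q := by field_simp
      linarith [hpq ▸ this]

/-- Finite Pinsker inequality. -/
lemma pinsker_fin {S : Type*} [Fintype S] (p q : S → ℝ)
    (hp : ∀ y, 0 ≤ p y) (hq : ∀ y, 0 ≤ q y)
    (hps : ∑ y, p y = 1) (hqs : ∑ y, q y = 1)
    (hsupp : ∀ y, q y = 0 → p y = 0) :
    ∑ y, |p y - q y| ≤ Real.sqrt 2 * Real.sqrt (KLfin p q) := by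
  classical
  set f : S → ℝ := fun y => (2 * p y + 4 * q y) / 3 with hf
  set g : S → ℝ := fun y => p y * Real.log (p y / q y) - p y + q y with hg
  have hfpos : ∀ y ∈ Finset.univ, 0 ≤ f y := fun y _ => by
    have := hp y; have := hq y; simp only [hf]; positivity
  have hgpos : ∀ y ∈ Finset.univ, 0 ≤ g y := fun y _ => ptE (hp y) (hq y) (hsupp y)
  have key : (∑ y, Real.sqrt (f y * g y)) ^ 2 ≤ (∑ y, f y) * ∑ y, g y :=
    Finset.sum_sq_le_sum_mul_sum_of_sq_eq_mul Finset.univ hfpos hgpos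
      (fun y hy => Real.sq_sqrt (mul_nonneg (hfpos y hy) (hgpos y hy)))
  have hfs : ∑ y, f y = 2 := by
    simp only [hf]
    rw [← Finset.sum_div]
    rw [Finset.sum_add_distrib, ← Finset.mul_sum, ← Finset.mul_sum, hps, hqs]
    norm_num
  have hgs : ∑ y, g y = KLfin p q := by
    simp only [hg, KLfin]
    rw [Finset.sum_add_distrib, Finset.sum_sub_distrib, hps, hqs]
    ring
  rw [hfs, hgs] at key
  have habs : ∀ y ∈ Finset.univ, |p y - q y| ≤ Real.sqrt (f y * g y) := by
    intro y _
    have hD := ptD (hp y) (hq y) (hsupp y)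
    have hfg : (p y - q y) ^ 2 ≤ f y * g y := by
      have : f y * g y = ((2 * p y + 4 * q y) * g y) / 3 := by
        simp only [hf]; ring
      rw [this]
      simp only [hg] at hD ⊢
      linarith
    calc |p y - q y| = Real.sqrt ((p y - q y) ^ 2) := (Real.sqrt_sq_eq_abs _).symm
      _ ≤ Real.sqrt (f y * g y) := Real.sqrt_le_sqrt hfg
  have hsum : ∑ y, |p y - q y| ≤ ∑ y, Real.sqrt (f y * g y) :=
    Finset.sum_le_sum habs
  have hA : 0 ≤ ∑ y, Real.sqrt (f y * g y) :=
    Finset.sum_nonneg (fun y _ => Real.sqrt_nonneg _)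
  calc ∑ y, |p y - q y| ≤ ∑ y, Real.sqrt (f y * g y) := hsum
    _ = Real.sqrt ((∑ y, Real.sqrt (f y * g y)) ^ 2) := (Real.sqrt_sq hA).symm
    _ ≤ Real.sqrt (2 * KLfin p q) := Real.sqrt_le_sqrt key
    _ = Real.sqrt 2 * Real.sqrt (KLfin p q) := Real.sqrt_mul (by norm_num) _

/-- Row-stochastic matrices contract the sup norm. -/
lemma stoch_mulVec_bound {S : Type*} [Fintype S] [Nonempty S] (P : Matrix S S ℝ)
    (hpos : ∀ x y, 0 ≤ P x y) (hsum : ∀ x, ∑ y, P x y = 1) (u : S → ℝ) (x : S) :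
    |(P.mulVec u) x| ≤ supNorm u := by
  calc |(P.mulVec u) x| = |∑ y, P x y * u y| := rfl
    _ ≤ ∑ y, |P x y * u y| := Finset.abs_sum_le_sum_abs _ _
    _ = ∑ y, P x y * |u y| := by
        apply Finset.sum_congr rfl
        intro y _
        rw [abs_mul, abs_of_nonneg (hpos x y)]
    _ ≤ ∑ y, P x y * supNorm u := by
        apply Finset.sum_le_sum
        intro y _
        exact mul_le_mul_of_nonneg_left (abs_le_supNorm u y) (hpos x y)
    _ = supNorm u := by rw [← Finset.sum_mul, hsum x, one_mul]

theorem stmt1 {S : Type*} [Fintype S] [Nonempty S] [DecidableEq S]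
    (P₁ P₂ : Matrix S S ℝ) (γ : ℝ)
    (h1pos : ∀ x y, 0 ≤ P₁ x y) (h1sum : ∀ x, ∑ y, P₁ x y = 1)
    (h2pos : ∀ x y, 0 ≤ P₂ x y) (h2sum : ∀ x, ∑ y, P₂ x y = 1)
    (hsupp : ∀ x y, P₂ x y = 0 → P₁ x y = 0)
    (hγ0 : 0 ≤ γ) (hγ1 : γ < 1) :
    IsUnit ((1 : Matrix S S ℝ) - γ • P₂) ∧
      ∀ v : S → ℝ,
        supNorm (((1 : Matrix S S ℝ) - γ • P₂)⁻¹.mulVec ((γ • P₁ - γ • P₂).mulVec v)) ≤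
          (γ * Real.sqrt 2 / (1 - γ)) *
            (⨆ x, Real.sqrt (KLfin (fun y => P₁ x y) (fun y => P₂ x y))) * supNorm v := by
  set M : Matrix S S ℝ := (1 : Matrix S S ℝ) - γ • P₂ with hM
  have hγsub : 0 < 1 - γ := by linarith
  -- key contraction lemma: supNorm of solutions
  have hcontr : ∀ u : S → ℝ, (1 - γ) * supNorm u ≤ supNorm (M.mulVec u) := by
    intro u
    have hexp : ∀ x, (M.mulVec u) x = u x - γ * (P₂.mulVec u) x := by
      intro x
      rw [hM, Matrix.sub_mulVec, Matrix.one_mulVec, Matrix.smul_mulVec]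
      rfl
    have hbd : ∀ x, |u x| ≤ supNorm (M.mulVec u) + γ * supNorm u := by
      intro x
      have h1 : u x = (M.mulVec u) x + γ * (P₂.mulVec u) x := by rw [hexp x]; ring
      calc |u x| = |(M.mulVec u) x + γ * (P₂.mulVec u) x| := by rw [← h1]
        _ ≤ |(M.mulVec u) x| + |γ * (P₂.mulVec u) x| := abs_add_le _ _
        _ ≤ supNorm (M.mulVec u) + γ * supNorm u := by
            apply add_le_add (abs_le_supNorm _ x)
            rw [abs_mul, abs_of_nonneg hγ0]
            exact mul_le_mul_of_nonneg_left (stoch_mulVec_bound P₂ h2pos h2sum u x) hγ0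
    have := supNorm_le hbd
    linarith
  -- invertibility
  have hMunit : IsUnit M := by
    rw [← Matrix.mulVec_injective_iff_isUnit]
    intro a b hab
    have hd : M.mulVec (a - b) = 0 := by
      rw [Matrix.mulVec_sub, hab, sub_self]
    have h0 : (1 - γ) * supNorm (a - b) ≤ supNorm (M.mulVec (a - b)) := hcontr (a - b)
    rw [hd] at h0
    have hz : supNorm (0 : S → ℝ) = 0 := by
      apply le_antisymm
      · exact supNorm_le (fun x => by simp)
      · exact supNorm_nonneg 0
    rw [hz] at h0
    have hsn : supNorm (a - b) ≤ 0 := by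
      nlinarith [supNorm_nonneg (a - b)]
    funext x
    have := (abs_le_supNorm (a - b) x).trans hsn
    have : |a x - b x| ≤ 0 := this
    have := abs_nonpos_iff.mp this
    linarith [sub_eq_zero.mp this, (sub_eq_zero.mp this : a x = b x)]
  refine ⟨hMunit, ?_⟩
  intro v
  set K : ℝ := ⨆ x, Real.sqrt (KLfin (fun y => P₁ x y) (fun y => P₂ x y)) with hK
  have hKle : ∀ x, Real.sqrt (KLfin (fun y => P₁ x y) (fun y => P₂ x y)) ≤ K := fun x =>
    le_ciSup (Set.Finite.bddAbove
      (Set.finite_range fun x => Real.sqrt (KLfin (fun y => P₁ x y) (fun y => P₂ x y)))) x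
  have hKnonneg : 0 ≤ K :=
    (Real.sqrt_nonneg _).trans (hKle (Classical.arbitrary S))
  set w : S → ℝ := (γ • P₁ - γ • P₂).mulVec v with hw
  set u : S → ℝ := M⁻¹.mulVec w with hu
  have hMu : M.mulVec u = w := by
    rw [hu, Matrix.mulVec_mulVec, Matrix.mul_nonsing_inv _ ((Matrix.isUnit_iff_isUnit_det M).mp hMunit),
      Matrix.one_mulVec]
  -- bound on w
  have hwbound : ∀ x, |w x| ≤ γ * Real.sqrt 2 * K * supNorm v := by
    intro x
    have hwx : w x = γ * ∑ y, (P₁ x y - P₂ x y) * v y := by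
      rw [hw]
      have : (γ • P₁ - γ • P₂) = γ • (P₁ - P₂) := by rw [smul_sub]
      rw [this, Matrix.smul_mulVec]
      simp only [Pi.smul_apply, smul_eq_mul, Matrix.mulVec, dotProduct, Matrix.sub_apply]
    have hrow : |∑ y, (P₁ x y - P₂ x y) * v y| ≤
        (∑ y, |P₁ x y - P₂ x y|) * supNorm v := by
      calc |∑ y, (P₁ x y - P₂ x y) * v y| ≤ ∑ y, |(P₁ x y - P₂ x y) * v y| :=
            Finset.abs_sum_le_sum_abs _ _
        _ = ∑ y, |P₁ x y - P₂ x y| * |v y| := by simp [abs_mul]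
        _ ≤ ∑ y, |P₁ x y - P₂ x y| * supNorm v := by
            apply Finset.sum_le_sum
            intro y _
            exact mul_le_mul_of_nonneg_left (abs_le_supNorm v y) (abs_nonneg _)
        _ = (∑ y, |P₁ x y - P₂ x y|) * supNorm v := by rw [Finset.sum_mul]
    have hpinsker : ∑ y, |P₁ x y - P₂ x y| ≤
        Real.sqrt 2 * Real.sqrt (KLfin (fun y => P₁ x y) (fun y => P₂ x y)) :=
      pinsker_fin (fun y => P₁ x y) (fun y => P₂ x y) (h1pos x) (h2pos x)
        (h1sum x) (h2sum x) (hsupp x)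
    calc |w x| = γ * |∑ y, (P₁ x y - P₂ x y) * v y| := by
          rw [hwx, abs_mul, abs_of_nonneg hγ0]
      _ ≤ γ * ((∑ y, |P₁ x y - P₂ x y|) * supNorm v) :=
          mul_le_mul_of_nonneg_left hrow hγ0
      _ ≤ γ * ((Real.sqrt 2 * Real.sqrt (KLfin (fun y => P₁ x y) (fun y => P₂ x y))) * supNorm v) := by
          apply mul_le_mul_of_nonneg_left _ hγ0
          exact mul_le_mul_of_nonneg_right hpinsker (supNorm_nonneg v)
      _ ≤ γ * ((Real.sqrt 2 * K) * supNorm v) := by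
          apply mul_le_mul_of_nonneg_left _ hγ0
          apply mul_le_mul_of_nonneg_right _ (supNorm_nonneg v)
          exact mul_le_mul_of_nonneg_left (hKle x) (Real.sqrt_nonneg 2)
      _ = γ * Real.sqrt 2 * K * supNorm v := by ring
  have hwsup : supNorm w ≤ γ * Real.sqrt 2 * K * supNorm v := supNorm_le hwbound
  have hfinal : (1 - γ) * supNorm u ≤ supNorm w := by
    have := hcontr u
    rwa [hMu] at this
  have : supNorm u ≤ (γ * Real.sqrt 2 * K * supNorm v) / (1 - γ) := by
    rw [le_div_iff₀ hγsub]
    calc supNorm u * (1 - γ) = (1 - γ) * supNorm u := by ring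
      _ ≤ supNorm w := hfinal
      _ ≤ γ * Real.sqrt 2 * K * supNorm v := hwsup
  calc supNorm (M⁻¹.mulVec ((γ • P₁ - γ • P₂).mulVec v)) = supNorm u := rfl
    _ ≤ (γ * Real.sqrt 2 * K * supNorm v) / (1 - γ) := this
    _ = (γ * Real.sqrt 2 / (1 - γ)) * K * supNorm v := by ring
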